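/- Let d ≥ 3 and let C_0, C_d', C_{d+1}' be positive constants. Let h : ℝ^d \ {0} → ℂ be a measurable function satisfying |h(x)| ≤ C_0 |x|^{−(d−1)} for all x ≠ 0, and let ψ : ℝ^d → ℂ be a measurable function satisfying |ψ(x)| ≤ C_0 for all x, |ψ(x)| ≤ C_d'|x|^{−d} and |ψ(x)| ≤ C_{d+1}'|x|^{−(d+1)} for |x| ≥ 1. Then there exists a constant C, depending only on d and the above constants, such that for all x_0 ∈ ℝ^d with |x_0| ≥ 2, | ∫_{ℝ^d} h(x − x_0) ψ(x) dx | ≤ C/|x_0|^{d−1}. -/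

import Mathlib

open MeasureTheory

open Metric Set Module


private lemma integrable_subtype_comap' {α : Type*} [MeasurableSpace α] {μ : Measure α}
    {s : Set α} (hs : MeasurableSet s) {f : α → ℝ} :
    Integrable (fun x : s => f x) (μ.comap Subtype.val) ↔ IntegrableOn f s μ := by
  rw [IntegrableOn, ← map_comap_subtype_coe hs,
    (MeasurableEmbedding.subtype_coe hs).integrable_map_iff]
  exact Iff.rfl

private lemma integrable_fun_norm_aux {E : Type*} [NormedAddCommGroup E] [NormedSpace ℝ E]
    [MeasurableSpace E] [BorelSpace E] [FiniteDimensional ℝ E] [Nontrivial E]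
    (μ : Measure E) [μ.IsAddHaarMeasure] {f : ℝ → ℝ}
    (hf : IntegrableOn (fun y => y ^ (finrank ℝ E - 1) * f y) (Ioi (0:ℝ))) :
    Integrable (fun x => f ‖x‖) μ := by
  set n := finrank ℝ E - 1 with hn
  have h0 : Integrable (fun y : Ioi (0:ℝ) => f y.1) (Measure.volumeIoiPow n) := by
    rw [Measure.volumeIoiPow, integrable_withDensity_iff
      ((measurable_subtype_coe.pow_const n).ennreal_ofReal)
      (Filter.Eventually.of_forall fun y => ENNReal.ofReal_lt_top)]
    have h1 : Integrable (fun y : Ioi (0:ℝ) => y.1 ^ n * f y.1) (volume.comap Subtype.val) :=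
      (integrable_subtype_comap' measurableSet_Ioi).2 hf
    refine h1.congr (Filter.Eventually.of_forall fun y => ?_)
    show (y:ℝ) ^ n * f y = f y * (ENNReal.ofReal ((y:ℝ) ^ n)).toReal
    rw [ENNReal.toReal_ofReal (pow_nonneg (le_of_lt y.2) n), mul_comm]
  have h2 : Integrable (fun z : sphere (0:E) 1 × Ioi (0:ℝ) => f z.2.1)
      (μ.toSphere.prod (Measure.volumeIoiPow n)) := by
    simpa using Integrable.smul_prod (integrable_const (1:ℝ)) h0
  have h3 : Integrable ((fun z : sphere (0:E) 1 × Ioi (0:ℝ) => f z.2.1) ∘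
      (homeomorphUnitSphereProd E)) (μ.comap Subtype.val) :=
    ((μ.measurePreserving_homeomorphUnitSphereProd).integrable_comp_emb
      (Homeomorph.measurableEmbedding _)).2 h2
  have h4 : IntegrableOn (fun x : E => f ‖x‖) ({0}ᶜ) μ :=
    (integrable_subtype_comap' (measurableSet_singleton (0:E)).compl).1
      (h3.congr (Filter.Eventually.of_forall fun x => by simp))
  rwa [IntegrableOn, MeasureTheory.restrict_compl_singleton] at h4

private lemma kernel_aux (d : ℕ) (hd : 3 ≤ d) (r : ℝ) (hr : 0 ≤ r) :
    Integrable (fun x : EuclideanSpace ℝ (Fin d) =>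
      (Icc (0:ℝ) r).indicator (fun t => 1 / t ^ (d-1)) ‖x‖) volume ∧
    ∫ x : EuclideanSpace ℝ (Fin d), (Icc (0:ℝ) r).indicator (fun t => 1 / t ^ (d-1)) ‖x‖ =
      (d * (volume (ball (0:EuclideanSpace ℝ (Fin d)) 1)).toReal) * r := by
  haveI : Nontrivial (EuclideanSpace ℝ (Fin d)) :=
    Module.nontrivial_of_finrank_pos (R := ℝ) (by rw [finrank_euclideanSpace_fin]; omega)
  set f : ℝ → ℝ := fun t => (Icc (0:ℝ) r).indicator (fun t => 1 / t ^ (d-1)) t with hf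
  have step1 : EqOn (fun y : ℝ => y ^ (d-1) * f y)
      ((Ioc (0:ℝ) r).indicator (fun _ => (1:ℝ))) (Ioi 0) := by
    intro y hy
    have hy0 : (0:ℝ) < y := hy
    show y ^ (d-1) * (Icc (0:ℝ) r).indicator (fun t => 1 / t ^ (d-1)) y
      = (Ioc (0:ℝ) r).indicator (fun _ => (1:ℝ)) y
    simp only [Set.indicator_apply, mem_Icc, mem_Ioc]
    by_cases hyr : y ≤ r
    · rw [if_pos ⟨hy0.le, hyr⟩, if_pos ⟨hy0, hyr⟩, one_div,
        mul_inv_cancel₀ (pow_ne_zero _ hy0.ne')]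
    · rw [if_neg (fun hc => hyr hc.2), if_neg (fun hc => hyr hc.2), mul_zero]
  have step2 : IntegrableOn (fun y : ℝ => y ^ (d-1) * f y) (Ioi (0:ℝ)) := by
    have hind : IntegrableOn ((Ioc (0:ℝ) r).indicator (fun _ => (1:ℝ))) (Ioi (0:ℝ)) :=
      ((integrable_indicator_iff measurableSet_Ioc).2
        (integrableOn_const measure_Ioc_lt_top.ne)).integrableOn
    exact hind.congr_fun step1.symm measurableSet_Ioi
  have hint : Integrable (fun x : EuclideanSpace ℝ (Fin d) => f ‖x‖) volume := by
    refine integrable_fun_norm_aux volume ?_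
    simpa only [finrank_euclideanSpace_fin] using step2
  refine ⟨hint, ?_⟩
  have hinner : ∫ y in Ioi (0:ℝ), y ^ (d-1) • f y = r := by
    have hEq : EqOn (fun y : ℝ => y ^ (d-1) • f y)
        ((Ioc (0:ℝ) r).indicator (fun _ => (1:ℝ))) (Ioi 0) := by
      intro y hy; simpa only [smul_eq_mul] using step1 hy
    rw [setIntegral_congr_fun measurableSet_Ioi hEq,
      setIntegral_indicator measurableSet_Ioc,
      inter_eq_self_of_subset_right Ioc_subset_Ioi_self, setIntegral_const, Real.volume_real_Ioc_of_le hr,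
      sub_zero, smul_eq_mul, mul_one]
  have hpolar := integral_fun_norm_addHaar (volume : Measure (EuclideanSpace ℝ (Fin d))) f
  rw [hpolar]
  simp only [finrank_euclideanSpace_fin] at hinner ⊢
  rw [hinner, nsmul_eq_mul, smul_eq_mul]
  rw [measureReal_def]; ring

/-- Convolution-type estimate: a kernel decaying like `|x|^{-(d-1)}`
convolved with a bounded, rapidly decaying function decays like `|x₀|^{-(d-1)}`. -/
theorem convolution_decay_estimate
    (d : ℕ) (hd : 3 ≤ d) (C₀ Cd' Cd1' : ℝ)
    (hC₀ : 0 < C₀) (hCd' : 0 < Cd') (hCd1' : 0 < Cd1')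
    (h ψ : EuclideanSpace ℝ (Fin d) → ℂ)
    (hh_meas : Measurable h) (hψ_meas : Measurable ψ)
    (hh_bound : ∀ x : EuclideanSpace ℝ (Fin d), x ≠ 0 → ‖h x‖ ≤ C₀ / ‖x‖ ^ (d - 1))
    (hψ_bound : ∀ x : EuclideanSpace ℝ (Fin d), ‖ψ x‖ ≤ C₀)
    (hψ_decay_d : ∀ x : EuclideanSpace ℝ (Fin d), 1 ≤ ‖x‖ → ‖ψ x‖ ≤ Cd' / ‖x‖ ^ d)
    (hψ_decay_d1 : ∀ x : EuclideanSpace ℝ (Fin d), 1 ≤ ‖x‖ → ‖ψ x‖ ≤ Cd1' / ‖x‖ ^ (d + 1)) :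
    ∃ C : ℝ, ∀ x₀ : EuclideanSpace ℝ (Fin d), 2 ≤ ‖x₀‖ →
      ‖∫ x, h (x - x₀) * ψ x‖ ≤ C / ‖x₀‖ ^ (d - 1) := by
  haveI : Nontrivial (EuclideanSpace ℝ (Fin d)) :=
    Module.nontrivial_of_finrank_pos (R := ℝ) (by rw [finrank_euclideanSpace_fin]; omega)
  have h2p : (0:ℝ) ≤ 2 ^ (d+1) := by positivity
  set M : ℝ := 2 ^ (d + 1) * (C₀ + Cd1') with hM
  have hM0 : 0 < M := by positivity
  have hψ_glob : ∀ x : EuclideanSpace ℝ (Fin d),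
      ‖ψ x‖ ≤ M * (((1 + ‖x‖) ^ (d + 1) : ℝ))⁻¹ := by
    intro x
    have h1 : (0:ℝ) < 1 + ‖x‖ := by positivity
    rw [← div_eq_mul_inv]
    rcases le_or_gt 1 ‖x‖ with hx | hx
    · have hb : (1 + ‖x‖) ^ (d+1) ≤ 2 ^ (d+1) * ‖x‖ ^ (d+1) := by
        rw [← mul_pow]
        exact pow_le_pow_left₀ h1.le (by linarith) _
      refine (hψ_decay_d1 x hx).trans ?_
      rw [div_le_div_iff₀ (by positivity) (pow_pos h1 _)]
      calc Cd1' * (1 + ‖x‖) ^ (d+1) ≤ Cd1' * (2 ^ (d+1) * ‖x‖ ^ (d+1)) :=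
            mul_le_mul_of_nonneg_left hb hCd1'.le
        _ = 2 ^ (d+1) * Cd1' * ‖x‖ ^ (d+1) := by ring
        _ ≤ M * ‖x‖ ^ (d+1) :=
            mul_le_mul_of_nonneg_right
              (mul_le_mul_of_nonneg_left (by linarith) h2p)
              (pow_nonneg (norm_nonneg x) _)
    · refine (hψ_bound x).trans ?_
      rw [le_div_iff₀ (pow_pos h1 _)]
      calc C₀ * (1 + ‖x‖) ^ (d+1) ≤ C₀ * 2 ^ (d+1) :=
            mul_le_mul_of_nonneg_left (pow_le_pow_left₀ h1.le (by linarith) _) hC₀.le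
        _ ≤ M := by rw [hM]; nlinarith
  have hKint : Integrable (fun x : EuclideanSpace ℝ (Fin d) =>
      (((1 + ‖x‖) ^ (d+1) : ℝ))⁻¹) := by
    have h0 : Integrable (fun x : EuclideanSpace ℝ (Fin d) => (1 + ‖x‖) ^ (-((d:ℝ)+1))) :=
      integrable_one_add_norm (by rw [finrank_euclideanSpace_fin]; linarith)
    refine h0.congr (Filter.Eventually.of_forall fun x => ?_)
    show (1 + ‖x‖) ^ (-((d:ℝ)+1)) = (((1 + ‖x‖) ^ (d+1) : ℝ))⁻¹
    rw [show -((d:ℝ)+1) = -((d+1 : ℕ) : ℝ) by push_cast; ring,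
      Real.rpow_neg (by positivity), Real.rpow_natCast]
  set K : ℝ := ∫ x : EuclideanSpace ℝ (Fin d), (((1 + ‖x‖) ^ (d+1) : ℝ))⁻¹ with hK
  have hK0 : 0 ≤ K := integral_nonneg (fun x => by positivity)
  set κ : ℝ := d * (volume (ball (0:EuclideanSpace ℝ (Fin d)) 1)).toReal with hκ
  have hκ0 : 0 ≤ κ := by
    rw [hκ]
    exact mul_nonneg (Nat.cast_nonneg d) ENNReal.toReal_nonneg
  refine ⟨2^d * C₀ * Cd1' * κ + 2^(d-1) * C₀ * (M * K), fun x₀ hRR => ?_⟩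
  have hR0 : (0:ℝ) < ‖x₀‖ := by linarith
  have hr1 : (1:ℝ) ≤ ‖x₀‖ / 2 := by linarith
  have hr0 : (0:ℝ) < ‖x₀‖ / 2 := by linarith
  obtain ⟨kInt, kVal⟩ := kernel_aux d hd (‖x₀‖/2) hr0.le
  set fk : ℝ → ℝ := fun t => (Icc (0:ℝ) (‖x₀‖/2)).indicator (fun t => 1 / t ^ (d-1)) t with hfk
  set A : ℝ := 2^(d+1) * C₀ * Cd1' / ‖x₀‖^(d+1) with hA
  set B : ℝ := 2^(d-1) * C₀ / ‖x₀‖^(d-1) with hB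
  have hA0 : 0 ≤ A := by positivity
  have hB0 : 0 ≤ B := by positivity
  have g1int : Integrable (fun x : EuclideanSpace ℝ (Fin d) => A * fk ‖x - x₀‖) :=
    (kInt.comp_sub_right x₀).const_mul A
  have g2int : Integrable (fun x : EuclideanSpace ℝ (Fin d) =>
      B * (M * (((1 + ‖x‖) ^ (d+1) : ℝ))⁻¹)) :=
    (hKint.const_mul M).const_mul B
  have hfk_nonneg : ∀ t : ℝ, 0 ≤ fk t :=
    fun t => Set.indicator_nonneg (fun s hs => by have h0s : (0:ℝ) ≤ s := hs.1; positivity) t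
  have hae : ∀ᵐ x : EuclideanSpace ℝ (Fin d), ‖h (x - x₀) * ψ x‖ ≤
      A * fk ‖x - x₀‖ + B * (M * (((1 + ‖x‖) ^ (d+1) : ℝ))⁻¹) := by
    have hne : ∀ᵐ x : EuclideanSpace ℝ (Fin d), x ≠ x₀ := by
      rw [ae_iff]
      simp only [ne_eq, not_not, Set.setOf_eq_eq_singleton]
      exact measure_singleton x₀
    filter_upwards [hne] with x hx
    have hsub : x - x₀ ≠ 0 := sub_ne_zero.2 hx
    have hn0 : (0:ℝ) < ‖x - x₀‖ := norm_pos_iff.2 hsub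
    have hhb := hh_bound _ hsub
    rw [norm_mul]
    have hdist : ‖x₀‖ - ‖x‖ ≤ ‖x - x₀‖ := by
      have := norm_sub_norm_le x₀ x
      rwa [norm_sub_rev x₀ x] at this
    by_cases hcase : ‖x - x₀‖ ≤ ‖x₀‖ / 2
    · have hx1 : 1 ≤ ‖x‖ := by linarith
      have hψ2 : ‖ψ x‖ ≤ Cd1' / (‖x₀‖/2) ^ (d+1) := by
        refine (hψ_decay_d1 x hx1).trans ?_
        refine div_le_div_of_nonneg_left hCd1'.le (pow_pos hr0 _) ?_
        exact pow_le_pow_left₀ hr0.le (by linarith) _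
      have hmem : ‖x - x₀‖ ∈ Icc (0:ℝ) (‖x₀‖/2) := ⟨norm_nonneg _, hcase⟩
      have key : ‖h (x - x₀)‖ * ‖ψ x‖ ≤ A * fk ‖x - x₀‖ := by
        calc ‖h (x - x₀)‖ * ‖ψ x‖
            ≤ (C₀ / ‖x - x₀‖^(d-1)) * (Cd1' / (‖x₀‖/2)^(d+1)) :=
              mul_le_mul hhb hψ2 (norm_nonneg _) (by positivity)
          _ = A * fk ‖x - x₀‖ := by
              show _ = A * (Icc (0:ℝ) (‖x₀‖/2)).indicator (fun t => 1 / t ^ (d-1)) ‖x - x₀‖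
              rw [Set.indicator_of_mem hmem, hA]
              have ha : (‖x - x₀‖:ℝ)^(d-1) ≠ 0 := pow_ne_zero _ hn0.ne'
              have hRp : (‖x₀‖:ℝ) ≠ 0 := hR0.ne'
              field_simp
              rw [← mul_pow, div_mul_cancel₀ _ two_ne_zero]
      exact key.trans (le_add_of_nonneg_right (mul_nonneg hB0 (by positivity)))
    · have hh2 : ‖h (x - x₀)‖ ≤ C₀ / (‖x₀‖/2) ^ (d-1) := by
        refine hhb.trans ?_
        refine div_le_div_of_nonneg_left hC₀.le (pow_pos hr0 _) ?_
        exact pow_le_pow_left₀ hr0.le (le_of_lt (not_le.1 hcase)) _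
      have key : ‖h (x - x₀)‖ * ‖ψ x‖ ≤ B * (M * (((1 + ‖x‖) ^ (d+1) : ℝ))⁻¹) := by
        calc ‖h (x - x₀)‖ * ‖ψ x‖
            ≤ (C₀ / (‖x₀‖/2)^(d-1)) * (M * (((1 + ‖x‖) ^ (d+1) : ℝ))⁻¹) :=
              mul_le_mul hh2 (hψ_glob x) (norm_nonneg _) (by positivity)
          _ = B * (M * (((1 + ‖x‖) ^ (d+1) : ℝ))⁻¹) := by
              rw [hB]
              have hRp : (‖x₀‖:ℝ) ≠ 0 := hR0.ne'
              congr 1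
              field_simp
              rw [← mul_pow, div_mul_cancel₀ _ two_ne_zero]
      exact key.trans (le_add_of_nonneg_left (mul_nonneg hA0 (hfk_nonneg _)))
  have I1 : ∫ x : EuclideanSpace ℝ (Fin d), A * fk ‖x - x₀‖ = A * (κ * (‖x₀‖/2)) := by
    rw [integral_const_mul, integral_sub_right_eq_self (fun x : EuclideanSpace ℝ (Fin d) => fk ‖x‖) x₀,
      kVal, hκ]
  have I2 : ∫ x : EuclideanSpace ℝ (Fin d), B * (M * (((1 + ‖x‖) ^ (d+1) : ℝ))⁻¹)
      = B * (M * K) := by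
    rw [integral_const_mul, integral_const_mul, hK]
  calc ‖∫ x, h (x - x₀) * ψ x‖ ≤ ∫ x, ‖h (x - x₀) * ψ x‖ := norm_integral_le_integral_norm _
    _ ≤ ∫ x : EuclideanSpace ℝ (Fin d),
          (A * fk ‖x - x₀‖ + B * (M * (((1 + ‖x‖) ^ (d+1) : ℝ))⁻¹)) :=
        integral_mono_of_nonneg (Filter.Eventually.of_forall fun x => norm_nonneg _)
          (g1int.add g2int) hae
    _ = A * (κ * (‖x₀‖/2)) + B * (M * K) := by rw [integral_add g1int g2int, I1, I2]
    _ ≤ (2^d * C₀ * Cd1' * κ + 2^(d-1) * C₀ * (M * K)) / ‖x₀‖ ^ (d-1) := by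
        rw [add_div]
        have e1 : A * (κ * (‖x₀‖/2)) = (2^d * C₀ * Cd1' * κ) / ‖x₀‖^d := by
          rw [hA, div_mul_eq_mul_div, div_eq_div_iff (by positivity) (by positivity)]
          ring
        have e2 : B * (M * K) = (2^(d-1) * C₀ * (M * K)) / ‖x₀‖^(d-1) := by
          rw [hB, div_mul_eq_mul_div]
        rw [e1, e2]
        refine add_le_add ?_ le_rfl
        refine div_le_div_of_nonneg_left (by positivity) (pow_pos hR0 _) ?_
        exact pow_le_pow_right₀ (by linarith) (by omega)
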